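/- Let X = ∏_{i∈ℕ} Xᵢ be a countable product of topological spaces. If every finite subproduct X_{i₁} × ⋯ × X_{i_k} has countable tightness and each Xᵢ is almost discrete (has exactly one non-isolated point), then X has countable tightness. -/
import Mathlib


/-- A space `α` has countable tightness. -/
def CountableTightness (α : Type*) [TopologicalSpace α] : Prop :=
  ∀ (A : Set α) (x : α), x ∈ closure A → ∃ B ⊆ A, B.Countable ∧ x ∈ closure B

/-- If `X = ∏_{i ∈ ℕ} X i` is a countable product of almost discrete spaces and
every finite subproduct has countable tightness, then `X` has countable
tightness. -/
theorem countableTightness_of_finite_subproducts {X : ℕ → Type*}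
    [∀ i, TopologicalSpace (X i)] (x : ∀ i, X i)
    (hni : ∀ i, ¬ IsOpen ({x i} : Set (X i)))
    (hiso : ∀ i, ∀ y : X i, y ≠ x i → IsOpen ({y} : Set (X i)))
    (hfin : ∀ s : Finset ℕ, CountableTightness (∀ i : s, X i)) :
    CountableTightness (∀ i, X i) := by
  intro A z hz
  -- For each finite s, a countable C ⊆ A whose projection to s has π z in its closure
  have key : ∀ s : Finset ℕ, ∃ C : Set (∀ i, X i), C ⊆ A ∧ C.Countable ∧
      (fun i : s => z i) ∈ closure ((fun f : ∀ i, X i => fun i : s => f i) '' C) := by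
    intro s
    set π : (∀ i, X i) → (∀ i : s, X i) := fun f i => f i with hπdef
    have hπ : Continuous π := continuous_pi fun i => continuous_apply _
    have h1 : π z ∈ closure (π '' A) :=
      (image_closure_subset_closure_image hπ) ⟨z, hz, rfl⟩
    obtain ⟨B, hBA, hBc, hBz⟩ := hfin s (π '' A) (π z) h1
    have hchoice : ∀ b : B, ∃ a ∈ A, π a = (b : ∀ i : s, X i) := fun b => hBA b.2
    choose g hg1 hg2 using hchoice
    haveI : Countable B := hBc.to_subtype
    refine ⟨Set.range g, ?_, Set.countable_range g, ?_⟩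
    · rintro _ ⟨b, rfl⟩; exact hg1 b
    · refine closure_mono ?_ hBz
      intro b hb
      exact ⟨g ⟨b, hb⟩, ⟨⟨b, hb⟩, rfl⟩, hg2 ⟨b, hb⟩⟩
  choose C hCA hCc hCz using key
  refine ⟨⋃ s : Finset ℕ, C s, Set.iUnion_subset hCA,
    Set.countable_iUnion hCc, ?_⟩
  rw [mem_closure_iff]
  intro o ho hzo
  obtain ⟨I, u, hu, hsub⟩ := isOpen_pi_iff.1 ho z hzo
  -- open set in the finite product
  set V : Set (∀ i : I, X i) := Set.univ.pi fun i : I => u i with hV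
  have hVopen : IsOpen V :=
    isOpen_set_pi Set.finite_univ fun i _ => (hu i i.2).1
  have hzV : (fun i : I => z i) ∈ V := fun i _ => (hu i i.2).2
  obtain ⟨y, hyV, hyC⟩ := (mem_closure_iff.1 (hCz I)) V hVopen hzV
  obtain ⟨c, hcC, hcy⟩ := hyC
  refine ⟨c, hsub ?_, Set.mem_iUnion.2 ⟨I, hcC⟩⟩
  intro i hi
  have : c i = y ⟨i, hi⟩ := by rw [← hcy]
  rw [this]
  exact hyV ⟨i, hi⟩ (Set.mem_univ _)
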